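/- Let A ⊆ ℤ^n be finite and for each k ∈ ℤ let A_k = {x ∈ A : x(1) = k}. Then the cell content of A is at least the sum over k ∈ ℤ of the cell contents of A_k: Σ(A) ≥ Σ_k Σ(A_k). -/

import Mathlib

/-- The coordinate convex hull of a set `B ⊆ ℤ^I`. -/
def cconvZ {ι : Type*} (B : Set (ι → ℤ)) : Set (ι → ℤ) :=
  {x | ∀ θ : ι → Bool, ∃ y ∈ B,
    ∀ i, (θ i = true → x i ≤ y i) ∧ (θ i = false → y i ≤ x i)}

/-- The number of integer cells `∏_{i∈I} {a i, a i + 1}` contained in the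
coordinate convex hull of the projection of `A` onto `I`.  For `I = ∅` this
equals `1` if `A` is nonempty and `0` otherwise. -/
noncomputable def cellCountZ {n : ℕ} (A : Finset (Fin n → ℤ)) (I : Finset (Fin n)) : ℕ :=
  Set.ncard {a : {i // i ∈ I} → ℤ |
    ∀ c : {i // i ∈ I} → ℤ, (∀ i, c i = a i ∨ c i = a i + 1) →
      c ∈ cconvZ {z : {i // i ∈ I} → ℤ | ∃ x ∈ A, ∀ i : {i // i ∈ I}, x i.1 = z i}}

/-- The cell content `Σ(A)`: the total number of integer cells in the
coordinate convex hulls of all coordinate projections of `A`, including the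
trivial projection (which contributes `1` iff `A ≠ ∅`). -/
noncomputable def cellContent {n : ℕ} (A : Finset (Fin n → ℤ)) : ℕ :=
  ∑ I : Finset (Fin n), cellCountZ A I

namespace CellLemma27

variable {n : ℕ}

def proj (A : Finset (Fin n → ℤ)) (I : Finset (Fin n)) : Set ({i // i ∈ I} → ℤ) :=
  {z | ∃ x ∈ A, ∀ i : {i // i ∈ I}, x i.1 = z i}

def cellSet (A : Finset (Fin n → ℤ)) (I : Finset (Fin n)) : Set ({i // i ∈ I} → ℤ) :=
  {a | ∀ c : {i // i ∈ I} → ℤ, (∀ i, c i = a i ∨ c i = a i + 1) → c ∈ cconvZ (proj A I)}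

lemma cellCountZ_eq (A : Finset (Fin n → ℤ)) (I : Finset (Fin n)) :
    cellCountZ A I = (cellSet A I).ncard := rfl

lemma cconvZ_mono {ι : Type*} {B B' : Set (ι → ℤ)} (h : B ⊆ B') : cconvZ B ⊆ cconvZ B' := by
  intro x hx θ
  obtain ⟨y, hy, hy2⟩ := hx θ
  exact ⟨y, h hy, hy2⟩

lemma proj_mono {A A' : Finset (Fin n → ℤ)} (h : A ⊆ A') (I : Finset (Fin n)) :
    proj A I ⊆ proj A' I := by
  rintro z ⟨x, hx, hxz⟩; exact ⟨x, h hx, hxz⟩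

lemma cellSet_mono {A A' : Finset (Fin n → ℤ)} (h : A ⊆ A') (I : Finset (Fin n)) :
    cellSet A I ⊆ cellSet A' I :=
  fun _ ha c hc => cconvZ_mono (proj_mono h I) (ha c hc)

lemma proj_finite (A : Finset (Fin n → ℤ)) (I : Finset (Fin n)) : (proj A I).Finite := by
  have : proj A I ⊆ (fun (x : Fin n → ℤ) (i : {i // i ∈ I}) => x i.1) '' ↑A := by
    rintro z ⟨x, hx, hxz⟩
    exact ⟨x, hx, funext fun i => hxz i⟩
  exact Set.Finite.subset (A.finite_toSet.image _) this

lemma cconvZ_finite {ι : Type*} [Fintype ι] {B : Set (ι → ℤ)} (hB : B.Finite) :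
    (cconvZ B).Finite := by
  rcases B.eq_empty_or_nonempty with rfl | hne
  · convert Set.finite_empty
    ext x
    simp only [cconvZ, Set.mem_setOf_eq, Set.mem_empty_iff_false, iff_false]
    intro h
    obtain ⟨y, hy, -⟩ := h fun _ => true
    exact hy
  · have hTne : hB.toFinset.Nonempty := by simpa using hne
    apply Set.Finite.subset
      (Set.Finite.pi fun i => Set.finite_Icc
        (hB.toFinset.inf' hTne fun y => y i) (hB.toFinset.sup' hTne fun y => y i))
    intro x hx
    rw [Set.mem_univ_pi]
    intro i
    obtain ⟨y, hy, hy2⟩ := hx fun _ => true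
    obtain ⟨y', hy', hy'2⟩ := hx fun _ => false
    constructor
    · exact le_trans (Finset.inf'_le (fun y => y i) (hB.mem_toFinset.mpr hy')) ((hy'2 i).2 rfl)
    · exact le_trans ((hy2 i).1 rfl) (Finset.le_sup' (fun y => y i) (hB.mem_toFinset.mpr hy))

lemma cellSet_finite (A : Finset (Fin n → ℤ)) (I : Finset (Fin n)) : (cellSet A I).Finite :=
  Set.Finite.subset (cconvZ_finite (proj_finite A I)) (fun a ha => ha a fun _ => Or.inl rfl)

lemma cellCountZ_eq_zero {A : Finset (Fin n → ℤ)} {I : Finset (Fin n)} {j : Fin n}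
    (hj : j ∈ I) {k : ℤ} (hA : ∀ x ∈ A, x j = k) : cellCountZ A I = 0 := by
  rw [cellCountZ_eq]
  have hempty : cellSet A I = ∅ := by
    ext a
    simp only [Set.mem_empty_iff_false, iff_false]
    intro ha
    set i0 : {i // i ∈ I} := ⟨j, hj⟩ with hi0
    have hcor : ∀ i, Function.update a i0 (a i0 + 1) i = a i ∨
        Function.update a i0 (a i0 + 1) i = a i + 1 := by
      intro i
      rcases eq_or_ne i i0 with rfl | hne
      · right; simp
      · left; simp [Function.update_of_ne hne]
    obtain ⟨y, ⟨x, hxA, hxy⟩, hy⟩ := ha _ hcor fun _ => true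
    obtain ⟨y', ⟨x', hx'A, hx'y⟩, hy'⟩ := ha a (fun _ => Or.inl rfl) fun _ => false
    have e1 : a i0 + 1 ≤ y i0 := by
      have := (hy i0).1 rfl
      rwa [Function.update_self] at this
    have e2 : y' i0 ≤ a i0 := (hy' i0).2 rfl
    have e3 : y i0 = k := by rw [← hxy i0]; exact hA x hxA
    have e4 : y' i0 = k := by rw [← hx'y i0]; exact hA x' hx'A
    omega
  rw [hempty, Set.ncard_empty]



variable {n : ℕ}

def extFun {I : Finset (Fin (n + 1))} (a : {i // i ∈ I} → ℤ) (h : ℤ) :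
    {i // i ∈ insert 0 I} → ℤ :=
  fun j => if hj : j.1 ∈ I then a ⟨j.1, hj⟩ else h

lemma extFun_injective {I : Finset (Fin (n + 1))} (h0 : (0 : Fin (n + 1)) ∉ I)
    {a b : {i // i ∈ I} → ℤ} {h h' : ℤ} (heq : extFun a h = extFun b h') :
    a = b ∧ h = h' := by
  constructor
  · funext i
    have := congrFun heq ⟨i.1, Finset.mem_insert_of_mem i.2⟩
    simpa [extFun, i.2] using this
  · have := congrFun heq ⟨0, Finset.mem_insert_self 0 I⟩
    simpa [extFun, h0] using this

lemma extFun_mem_cellSet {A : Finset (Fin (n + 1) → ℤ)} {I : Finset (Fin (n + 1))}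
    (h0 : (0 : Fin (n + 1)) ∉ I) {a : {i // i ∈ I} → ℤ} {k k' h : ℤ}
    (ha : a ∈ cellSet (A.filter (fun x => x 0 = k)) I)
    (ha' : a ∈ cellSet (A.filter (fun x => x 0 = k')) I)
    (hk : k ≤ h) (hk' : h + 1 ≤ k') :
    extFun a h ∈ cellSet A (insert 0 I) := by
  intro c hc θ
  set j0 : {i // i ∈ insert 0 I} := ⟨0, Finset.mem_insert_self 0 I⟩ with hj0
  have hc0 : c j0 = h ∨ c j0 = h + 1 := by
    have := hc j0
    simpa [extFun, show j0.1 ∉ I from h0] using this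
  set c' : {i // i ∈ I} → ℤ := fun i => c ⟨i.1, Finset.mem_insert_of_mem i.2⟩ with hc'def
  have hc' : ∀ i, c' i = a i ∨ c' i = a i + 1 := by
    intro i
    have := hc ⟨i.1, Finset.mem_insert_of_mem i.2⟩
    simpa [extFun, c', i.2] using this
  set θ' : {i // i ∈ I} → Bool := fun i => θ ⟨i.1, Finset.mem_insert_of_mem i.2⟩ with hθ'def
  cases hθ0 : θ j0 with
  | true =>
    obtain ⟨y, ⟨x, hxA, hxy⟩, hy⟩ := ha' c' hc' θ'
    rw [Finset.mem_filter] at hxA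
    refine ⟨fun j => x j.1, ⟨x, hxA.1, fun _ => rfl⟩, ?_⟩
    intro j
    rcases Finset.mem_insert.mp j.2 with hj | hj
    · have hjj : j = j0 := Subtype.ext hj
      rw [hjj]
      constructor
      · intro _
        show c j0 ≤ x (0 : Fin (n + 1))
        rw [hxA.2]
        omega
      · intro hf
        rw [hθ0] at hf
        exact absurd hf (by simp)
    · have h1 := hy ⟨j.1, hj⟩
      have hjj : (⟨j.1, Finset.mem_insert_of_mem hj⟩ : {i // i ∈ insert 0 I}) = j :=
        Subtype.ext rfl
      have hcj : c' ⟨j.1, hj⟩ = c j := rfl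
      have hθj : θ' ⟨j.1, hj⟩ = θ j := rfl
      have hyx : x j.1 = y ⟨j.1, hj⟩ := hxy ⟨j.1, hj⟩
      simpa only [← hyx] using h1
  | false =>
    obtain ⟨y, ⟨x, hxA, hxy⟩, hy⟩ := ha c' hc' θ'
    rw [Finset.mem_filter] at hxA
    refine ⟨fun j => x j.1, ⟨x, hxA.1, fun _ => rfl⟩, ?_⟩
    intro j
    rcases Finset.mem_insert.mp j.2 with hj | hj
    · have hjj : j = j0 := Subtype.ext hj
      rw [hjj]
      constructor
      · intro hf
        rw [hθ0] at hf
        exact absurd hf (by simp)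
      · intro _
        show x (0 : Fin (n + 1)) ≤ c j0
        rw [hxA.2]
        omega
    · have h1 := hy ⟨j.1, hj⟩
      have hjj : (⟨j.1, Finset.mem_insert_of_mem hj⟩ : {i // i ∈ insert 0 I}) = j :=
        Subtype.ext rfl
      have hcj : c' ⟨j.1, hj⟩ = c j := rfl
      have hθj : θ' ⟨j.1, hj⟩ = θ j := rfl
      have hyx : x j.1 = y ⟨j.1, hj⟩ := hxy ⟨j.1, hj⟩
      simpa only [← hyx] using h1



variable {n : ℕ}

open Classical in
/-- The set of fiber values `k` for which `a` is a cell of the fiber `A_k`. -/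
noncomputable def Kset (A : Finset (Fin (n + 1) → ℤ)) (I : Finset (Fin (n + 1)))
    (a : {i // i ∈ I} → ℤ) : Finset ℤ :=
  (A.image (fun x => x 0)).filter
    (fun k => a ∈ cellSet (A.filter (fun x => x 0 = k)) I)

open Classical in
lemma mem_Kset {A : Finset (Fin (n + 1) → ℤ)} {I : Finset (Fin (n + 1))}
    {a : {i // i ∈ I} → ℤ} {k : ℤ} :
    k ∈ Kset A I a ↔ k ∈ A.image (fun x => x 0)
      ∧ a ∈ cellSet (A.filter (fun x => x 0 = k)) I := Finset.mem_filter

open Classical in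
lemma card_Kset (A : Finset (Fin (n + 1) → ℤ)) (I : Finset (Fin (n + 1)))
    (a : {i // i ∈ I} → ℤ) :
    (Kset A I a).card = ∑ k ∈ A.image (fun x => x 0),
      if a ∈ cellSet (A.filter (fun x => x 0 = k)) I then 1 else 0 :=
  Finset.card_filter _ _

noncomputable def Gset (A : Finset (Fin (n + 1) → ℤ)) (I : Finset (Fin (n + 1)))
    (a : {i // i ∈ I} → ℤ) : Finset ℤ :=
  if hne : (Kset A I a).Nonempty then
    Finset.Ico ((Kset A I a).min' hne) ((Kset A I a).max' hne) else ∅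

lemma Gset_of_nonempty {A : Finset (Fin (n + 1) → ℤ)} {I : Finset (Fin (n + 1))}
    {a : {i // i ∈ I} → ℤ} (hne : (Kset A I a).Nonempty) :
    Gset A I a = Finset.Ico ((Kset A I a).min' hne) ((Kset A I a).max' hne) :=
  dif_pos hne

lemma Gset_of_empty {A : Finset (Fin (n + 1) → ℤ)} {I : Finset (Fin (n + 1))}
    {a : {i // i ∈ I} → ℤ} (hne : ¬ (Kset A I a).Nonempty) :
    Gset A I a = ∅ := dif_neg hne

lemma nat_aux1 {c g : ℕ} {m M : ℤ} (h1 : c ≤ (M + 1 - m).toNat)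
    (h2 : g = (M - m).toNat) (h3 : m ≤ M) : c - 1 ≤ g := by omega

lemma nat_aux2 (c : ℕ) : c ≤ 1 + (c - 1) := by omega

lemma key (A : Finset (Fin (n + 1) → ℤ)) {I : Finset (Fin (n + 1))}
    (h0 : (0 : Fin (n + 1)) ∉ I) :
    ∑ k ∈ A.image (fun x => x 0), cellCountZ (A.filter (fun x => x 0 = k)) I
      ≤ cellCountZ A I + cellCountZ A (insert 0 I) := by
  classical
  set S : Finset ({i // i ∈ I} → ℤ) := (cellSet_finite A I).toFinset with hSdef
  have hSmem : ∀ a, a ∈ S ↔ a ∈ cellSet A I := fun a => (cellSet_finite A I).mem_toFinset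
  -- LHS equals a double count
  have hA1 : ∀ k, cellCountZ (A.filter (fun x => x 0 = k)) I
      = (S.filter (fun a => a ∈ cellSet (A.filter (fun x => x 0 = k)) I)).card := by
    intro k
    have hset : cellSet (A.filter (fun x => x 0 = k)) I
        = ↑(S.filter (fun a => a ∈ cellSet (A.filter (fun x => x 0 = k)) I)) := by
      ext a
      simp only [Finset.coe_filter, Set.mem_setOf_eq, hSmem]
      exact ⟨fun h => ⟨cellSet_mono (Finset.filter_subset _ _) I h, h⟩, fun h => h.2⟩
    have := congrArg Set.ncard hset
    rwa [Set.ncard_coe_finset] at this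
  have hswap : ∑ k ∈ A.image (fun x => x 0), cellCountZ (A.filter (fun x => x 0 = k)) I
      = ∑ a ∈ S, (Kset A I a).card := by
    calc ∑ k ∈ A.image (fun x => x 0), cellCountZ (A.filter (fun x => x 0 = k)) I
        = ∑ k ∈ A.image (fun x => x 0),
            (S.filter (fun a => a ∈ cellSet (A.filter (fun x => x 0 = k)) I)).card :=
          Finset.sum_congr rfl fun k _ => hA1 k
      _ = ∑ k ∈ A.image (fun x => x 0), ∑ a ∈ S,
            (if a ∈ cellSet (A.filter (fun x => x 0 = k)) I then 1 else 0) :=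
          Finset.sum_congr rfl fun k _ => Finset.card_filter _ _
      _ = ∑ a ∈ S, ∑ k ∈ A.image (fun x => x 0),
            (if a ∈ cellSet (A.filter (fun x => x 0 = k)) I then 1 else 0) :=
          Finset.sum_comm
      _ = ∑ a ∈ S, (Kset A I a).card :=
          Finset.sum_congr rfl fun a _ => (card_Kset A I a).symm
  have hcardS : cellCountZ A I = S.card := by
    rw [cellCountZ_eq, Set.ncard_eq_toFinset_card _ (cellSet_finite A I)]
  have hGcard : ∀ a, (Kset A I a).card - 1 ≤ (Gset A I a).card := by
    intro a
    by_cases hne : (Kset A I a).Nonempty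
    · have hsub : Kset A I a ⊆
          Finset.Icc ((Kset A I a).min' hne) ((Kset A I a).max' hne) := fun x hx =>
        Finset.mem_Icc.mpr ⟨Finset.min'_le _ _ hx, Finset.le_max' _ _ hx⟩
      have h1 := Finset.card_le_card hsub
      rw [Int.card_Icc] at h1
      have h2 : (Gset A I a).card
          = ((Kset A I a).max' hne - (Kset A I a).min' hne).toNat := by
        rw [Gset_of_nonempty hne, Int.card_Ico]
      have h3 : (Kset A I a).min' hne ≤ (Kset A I a).max' hne :=
        Finset.min'_le _ _ (Finset.max'_mem _ _)
      exact nat_aux1 h1 h2 h3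
    · rw [Finset.not_nonempty_iff_eq_empty] at hne
      rw [hne, Finset.card_empty]
      exact le_trans (Nat.sub_le 0 1) (Nat.zero_le _)
  -- the injection into cells of `insert 0 I`
  have hφinj : Function.Injective
      (fun p : (Σ _ : ({i // i ∈ I} → ℤ), ℤ) => extFun p.1 p.2) := by
    rintro ⟨a, h⟩ ⟨b, h'⟩ heq
    obtain ⟨h1, h2⟩ := extFun_injective h0 heq
    subst h1; subst h2; rfl
  have hsub2 : ∀ p ∈ S.sigma (Gset A I),
      extFun p.1 p.2 ∈ cellSet A (insert 0 I) := by
    rintro ⟨a, h⟩ hp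
    rw [Finset.mem_sigma] at hp
    obtain ⟨haS, hhG⟩ := hp
    by_cases hne : (Kset A I a).Nonempty
    · rw [Gset_of_nonempty hne, Finset.mem_Ico] at hhG
      have hmin := (mem_Kset.mp (Finset.min'_mem (Kset A I a) hne)).2
      have hmax := (mem_Kset.mp (Finset.max'_mem (Kset A I a) hne)).2
      exact extFun_mem_cellSet h0 hmin hmax hhG.1 hhG.2
    · rw [Gset_of_empty hne] at hhG
      exact absurd hhG (Finset.notMem_empty _)
  have hbound : ∑ a ∈ S, ((Kset A I a).card - 1) ≤ cellCountZ A (insert 0 I) := by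
    calc ∑ a ∈ S, ((Kset A I a).card - 1) ≤ ∑ a ∈ S, (Gset A I a).card :=
          Finset.sum_le_sum fun a _ => hGcard a
      _ = (S.sigma (Gset A I)).card := (Finset.card_sigma _ _).symm
      _ = ((S.sigma (Gset A I)).image
            (fun p : (Σ _ : ({i // i ∈ I} → ℤ), ℤ) => extFun p.1 p.2)).card :=
          (Finset.card_image_of_injective _ hφinj).symm
      _ ≤ (cellSet_finite A (insert 0 I)).toFinset.card := by
          apply Finset.card_le_card
          intro z hz
          rw [Finset.mem_image] at hz
          obtain ⟨p, hpmem, rfl⟩ := hz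
          rw [(cellSet_finite A (insert 0 I)).mem_toFinset]
          exact hsub2 p hpmem
      _ = cellCountZ A (insert 0 I) := by
          rw [cellCountZ_eq, Set.ncard_eq_toFinset_card _ (cellSet_finite A (insert 0 I))]
  calc ∑ k ∈ A.image (fun x => x 0), cellCountZ (A.filter (fun x => x 0 = k)) I
      = ∑ a ∈ S, (Kset A I a).card := hswap
    _ ≤ ∑ a ∈ S, (1 + ((Kset A I a).card - 1)) := Finset.sum_le_sum fun a _ => nat_aux2 _
    _ = S.card + ∑ a ∈ S, ((Kset A I a).card - 1) := by
        rw [Finset.sum_add_distrib, Finset.sum_const, smul_eq_mul, mul_one]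
    _ ≤ cellCountZ A I + cellCountZ A (insert 0 I) := by
        rw [hcardS]
        exact Nat.add_le_add_left hbound _

end CellLemma27

/-- **Lemma 2.7.** Partitioning `A ⊆ ℤ^n` into the fibers
`A_k = {x ∈ A : x(1) = k}` of the first coordinate, the cell content of `A`
is at least the sum of the cell contents of the fibers. -/
theorem cellContent_ge_sum_fibers (n : ℕ) (A : Finset (Fin (n + 1) → ℤ)) :
    ∑ k ∈ A.image (fun x => x 0),
      cellContent (A.filter (fun x => x 0 = k)) ≤ cellContent A := by
  classical
  have hfib : ∀ k ∈ A.image (fun x => x 0), cellContent (A.filter (fun x => x 0 = k))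
      = ∑ I ∈ Finset.univ.filter (fun I : Finset (Fin (n + 1)) => (0 : Fin (n + 1)) ∉ I),
          cellCountZ (A.filter (fun x => x 0 = k)) I := by
    intro k _
    rw [cellContent, ← Finset.sum_filter_add_sum_filter_not Finset.univ
      (fun I : Finset (Fin (n + 1)) => (0 : Fin (n + 1)) ∉ I)]
    have hz : ∑ I ∈ Finset.univ.filter
        (fun I : Finset (Fin (n + 1)) => ¬ (0 : Fin (n + 1)) ∉ I),
        cellCountZ (A.filter (fun x => x 0 = k)) I = 0 := by
      apply Finset.sum_eq_zero
      intro I hI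
      rw [Finset.mem_filter] at hI
      exact CellLemma27.cellCountZ_eq_zero (not_not.mp hI.2)
        (fun x hx => (Finset.mem_filter.mp hx).2)
    rw [hz, add_zero]
  rw [Finset.sum_congr rfl hfib, Finset.sum_comm]
  have step : ∑ I ∈ Finset.univ.filter
        (fun I : Finset (Fin (n + 1)) => (0 : Fin (n + 1)) ∉ I),
        ∑ k ∈ A.image (fun x => x 0), cellCountZ (A.filter (fun x => x 0 = k)) I
      ≤ ∑ I ∈ Finset.univ.filter
        (fun I : Finset (Fin (n + 1)) => (0 : Fin (n + 1)) ∉ I),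
        (cellCountZ A I + cellCountZ A (insert 0 I)) :=
    Finset.sum_le_sum fun I hI => CellLemma27.key A (Finset.mem_filter.mp hI).2
  refine le_trans step ?_
  rw [Finset.sum_add_distrib]
  have h2 : ∑ I ∈ Finset.univ.filter
        (fun I : Finset (Fin (n + 1)) => (0 : Fin (n + 1)) ∉ I),
        cellCountZ A (insert 0 I)
      = ∑ I ∈ Finset.univ.filter
        (fun I : Finset (Fin (n + 1)) => (0 : Fin (n + 1)) ∈ I), cellCountZ A I := by
    apply Finset.sum_nbij' (i := fun I => insert (0 : Fin (n + 1)) I)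
      (j := fun I => I.erase (0 : Fin (n + 1)))
    · intro I hI
      rw [Finset.mem_filter] at hI ⊢
      exact ⟨Finset.mem_univ _, Finset.mem_insert_self _ _⟩
    · intro I hI
      rw [Finset.mem_filter] at hI ⊢
      exact ⟨Finset.mem_univ _, Finset.notMem_erase _ _⟩
    · intro I hI
      rw [Finset.mem_filter] at hI
      exact Finset.erase_insert hI.2
    · intro I hI
      rw [Finset.mem_filter] at hI
      exact Finset.insert_erase hI.2
    · intro I _
      rfl
  rw [h2, cellContent, ← Finset.sum_filter_add_sum_filter_not Finset.univ
    (fun I : Finset (Fin (n + 1)) => (0 : Fin (n + 1)) ∉ I) (fun I => cellCountZ A I)]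
  have h3 : Finset.univ.filter (fun I : Finset (Fin (n + 1)) => ¬ (0 : Fin (n + 1)) ∉ I)
      = Finset.univ.filter (fun I : Finset (Fin (n + 1)) => (0 : Fin (n + 1)) ∈ I) := by
    apply Finset.filter_congr
    intro I _
    simp [not_not]
  rw [h3]
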